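/- If A ⊆ ℝ is countable and dense, then ℝ \ A with the induced order is order isomorphic to the set of irrational numbers ℝ \ ℚ with the induced order. -/
import Mathlib

noncomputable section

namespace ComplOrderIsoAux

variable {A B : Set ℝ}

/-- The canonical extension of an order isomorphism between dense subsets of `ℝ`. -/
def ext (e : A ≃o B) (x : ℝ) : ℝ :=
  sSup ((fun a : A => (e a : ℝ)) '' {a : A | (a : ℝ) < x})

lemma S_nonempty (hA : Dense A) (e : A ≃o B) (x : ℝ) :
    ((fun a : A => (e a : ℝ)) '' {a : A | (a : ℝ) < x}).Nonempty := by
  obtain ⟨y, hy, hyx⟩ := hA.exists_lt x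
  exact ⟨_, ⟨⟨y, hy⟩, hyx, rfl⟩⟩

lemma S_bddAbove (hA : Dense A) (e : A ≃o B) (x : ℝ) :
    BddAbove ((fun a : A => (e a : ℝ)) '' {a : A | (a : ℝ) < x}) := by
  obtain ⟨y, hy, hxy⟩ := hA.exists_gt x
  refine ⟨(e ⟨y, hy⟩ : ℝ), ?_⟩
  rintro _ ⟨a, ha, rfl⟩
  have : a ≤ ⟨y, hy⟩ := by
    rw [← Subtype.coe_le_coe]
    exact le_of_lt (lt_trans ha hxy)
  exact Subtype.coe_le_coe.2 (e.monotone this)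

lemma le_ext (hA : Dense A) (e : A ≃o B) {x : ℝ} {a : A} (h : (a : ℝ) < x) :
    (e a : ℝ) ≤ ext e x :=
  le_csSup (S_bddAbove hA e x) ⟨a, h, rfl⟩

lemma lt_ext (hA : Dense A) (e : A ≃o B) {x : ℝ} {a : A} (h : (a : ℝ) < x) :
    (e a : ℝ) < ext e x := by
  obtain ⟨y, hy, hay, hyx⟩ := hA.exists_between h
  have h1 : (e a : ℝ) < e ⟨y, hy⟩ :=
    Subtype.coe_lt_coe.2 (e.strictMono (Subtype.coe_lt_coe.1 hay))
  exact lt_of_lt_of_le h1 (le_ext hA e hyx)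

lemma ext_le (hA : Dense A) (e : A ≃o B) {x : ℝ} {b : A} (h : x ≤ (b : ℝ)) :
    ext e x ≤ (e b : ℝ) := by
  refine csSup_le (S_nonempty hA e x) ?_
  rintro _ ⟨a, ha, rfl⟩
  exact Subtype.coe_le_coe.2 (e.monotone (Subtype.coe_le_coe.1 (le_of_lt (lt_of_lt_of_le ha h))))

lemma ext_strictMono (hA : Dense A) (e : A ≃o B) : StrictMono (ext e) := by
  intro x y hxy
  obtain ⟨a, ha, hxa, hay⟩ := hA.exists_between hxy
  calc ext e x ≤ (e ⟨a, ha⟩ : ℝ) := ext_le hA e (le_of_lt hxa)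
    _ < ext e y := lt_ext hA e hay

lemma ext_symm_ext (hA : Dense A) (hB : Dense B) (e : A ≃o B) (x : ℝ) :
    ext e.symm (ext e x) = x := by
  have hub : x ∈ upperBounds ((fun b : B => (e.symm b : ℝ)) '' {b : B | (b : ℝ) < ext e x}) := by
    rintro _ ⟨b, hb, rfl⟩
    obtain ⟨_, ⟨a, ha, rfl⟩, hba⟩ :=
      exists_lt_of_lt_csSup (S_nonempty hA e x) hb
    have : e.symm b < a := e.symm.strictMono (Subtype.coe_lt_coe.1 hba) |>.trans_eq
      (e.symm_apply_apply a)
    exact le_of_lt (lt_trans (Subtype.coe_lt_coe.2 this) ha)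
  have hlub : IsLUB ((fun b : B => (e.symm b : ℝ)) '' {b : B | (b : ℝ) < ext e x}) x := by
    refine ⟨hub, fun u hu => ?_⟩
    by_contra hux
    push_neg at hux
    obtain ⟨y, hy, huy, hyx⟩ := hA.exists_between hux
    have hmem : (e ⟨y, hy⟩ : ℝ) < ext e x := lt_ext hA e hyx
    have hyim : y ∈ (fun b : B => (e.symm b : ℝ)) '' {b : B | (b : ℝ) < ext e x} := by
      refine ⟨e ⟨y, hy⟩, hmem, ?_⟩
      simp
    exact absurd (lt_of_lt_of_le huy (hu hyim)) (lt_irrefl u)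
  obtain ⟨z, hz, hzx⟩ := hA.exists_lt x
  have hne : ((fun b : B => (e.symm b : ℝ)) '' {b : B | (b : ℝ) < ext e x}).Nonempty := by
    refine ⟨_, ⟨e ⟨z, hz⟩, lt_ext hA e hzx, rfl⟩⟩
  exact hlub.csSup_eq hne

lemma ext_apply_mem (hA : Dense A) (hB : Dense B) (e : A ≃o B) (a : A) :
    ext e (a : ℝ) = (e a : ℝ) := by
  have h1 : ext e (a : ℝ) ≤ (e a : ℝ) := ext_le hA e le_rfl
  refine le_antisymm h1 ?_
  by_contra h
  push_neg at h
  obtain ⟨y, hy, h1y, h2y⟩ := hB.exists_between h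
  set b : B := ⟨y, hy⟩
  have hba : e.symm b < a := by
    have : b < e a := Subtype.coe_lt_coe.1 h2y
    have := e.symm.strictMono this
    rwa [e.symm_apply_apply] at this
  have := le_ext hA e (x := (a : ℝ)) (a := e.symm b) (Subtype.coe_lt_coe.2 hba)
  rw [e.apply_symm_apply] at this
  exact absurd (lt_of_lt_of_le h1y this) (lt_irrefl _)

/-- The extension as an order isomorphism of `ℝ`. -/
def extIso (hA : Dense A) (hB : Dense B) (e : A ≃o B) : ℝ ≃o ℝ :=
  StrictMono.orderIsoOfSurjective (ext e) (ext_strictMono hA e)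
    (fun y => ⟨ext e.symm y, by
      have := ext_symm_ext hB hA e.symm y
      rwa [e.symm_symm] at this⟩)

lemma extIso_apply (hA : Dense A) (hB : Dense B) (e : A ≃o B) (x : ℝ) :
    extIso hA hB e x = ext e x := rfl

lemma extIso_mem_iff (hA : Dense A) (hB : Dense B) (e : A ≃o B) (x : ℝ) :
    x ∈ A ↔ extIso hA hB e x ∈ B := by
  rw [extIso_apply]
  constructor
  · intro hx
    rw [show x = ((⟨x, hx⟩ : A) : ℝ) from rfl, ext_apply_mem hA hB e]
    exact (e ⟨x, hx⟩).2
  · intro hx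
    set b : B := ⟨ext e x, hx⟩
    have h1 : ext e ((e.symm b : A) : ℝ) = (e (e.symm b) : ℝ) := ext_apply_mem hA hB e _
    rw [e.apply_symm_apply] at h1
    have : ((e.symm b : A) : ℝ) = x := (ext_strictMono hA e).injective h1
    rw [← this]
    exact (e.symm b).2

end ComplOrderIsoAux

/-- If `A ⊆ ℝ` is countable and dense, then `ℝ \ A` with the induced order is order isomorphic
to the set of irrational numbers with the induced order. -/
theorem compl_countable_dense_orderIso_irrational
    (A : Set ℝ) (hc : A.Countable) (hd : Dense A) :
    Nonempty ((Aᶜ : Set ℝ) ≃o ({x : ℝ | Irrational x} : Set ℝ)) := by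
  classical
  set Q : Set ℝ := Set.range ((↑) : ℚ → ℝ) with hQ
  have hdQ : Dense Q := Rat.denseRange_cast
  have hcQ : Q.Countable := Set.countable_range _
  -- instances for iso_of_countable_dense
  haveI : Countable A := hc.to_subtype
  haveI : Countable Q := hcQ.to_subtype
  haveI : Nonempty A := hd.nonempty.to_subtype
  haveI : Nonempty Q := hdQ.nonempty.to_subtype
  haveI : DenselyOrdered A := ⟨fun a b hab => by
    obtain ⟨c, hc', h1, h2⟩ := hd.exists_between (Subtype.coe_lt_coe.2 hab)
    exact ⟨⟨c, hc'⟩, Subtype.coe_lt_coe.1 h1, Subtype.coe_lt_coe.1 h2⟩⟩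
  haveI : DenselyOrdered Q := ⟨fun a b hab => by
    obtain ⟨c, hc', h1, h2⟩ := hdQ.exists_between (Subtype.coe_lt_coe.2 hab)
    exact ⟨⟨c, hc'⟩, Subtype.coe_lt_coe.1 h1, Subtype.coe_lt_coe.1 h2⟩⟩
  haveI : NoMinOrder A := ⟨fun a => by
    obtain ⟨c, hc', h⟩ := hd.exists_lt (a : ℝ)
    exact ⟨⟨c, hc'⟩, Subtype.coe_lt_coe.1 h⟩⟩
  haveI : NoMinOrder Q := ⟨fun a => by
    obtain ⟨c, hc', h⟩ := hdQ.exists_lt (a : ℝ)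
    exact ⟨⟨c, hc'⟩, Subtype.coe_lt_coe.1 h⟩⟩
  haveI : NoMaxOrder A := ⟨fun a => by
    obtain ⟨c, hc', h⟩ := hd.exists_gt (a : ℝ)
    exact ⟨⟨c, hc'⟩, Subtype.coe_lt_coe.1 h⟩⟩
  haveI : NoMaxOrder Q := ⟨fun a => by
    obtain ⟨c, hc', h⟩ := hdQ.exists_gt (a : ℝ)
    exact ⟨⟨c, hc'⟩, Subtype.coe_lt_coe.1 h⟩⟩
  obtain ⟨e⟩ : Nonempty (A ≃o Q) := Order.iso_of_countable_dense A Q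
  set f := ComplOrderIsoAux.extIso hd hdQ e
  have hmem : ∀ x : ℝ, x ∈ A ↔ f x ∈ Q := ComplOrderIsoAux.extIso_mem_iff hd hdQ e
  have hmem' : ∀ x : ℝ, x ∈ Aᶜ ↔ f x ∈ {x : ℝ | Irrational x} := by
    intro x
    simp only [Set.mem_compl_iff, Set.mem_setOf_eq, Irrational, hQ]
    exact not_iff_not.2 (hmem x)
  exact ⟨⟨f.toEquiv.subtypeEquiv hmem', by
    intro a b
    simp [Equiv.subtypeEquiv, Subtype.coe_le_coe]⟩⟩
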